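/- arXiv:2008.04018 — 5 statements merged into one kernel-verified Lean document; each statement's English description precedes it below -/
import Mathlib

section
/- Let k ≥ 1 and let u₀, u₁, …, u_{k+1} ∈ ℤ² satisfy det(u_{i−1}, u_i) = 1 for all 1 ≤ i ≤ k+1, and let λ₁,…,λ_k be integers with u_{i−1} + u_{i+1} = λ_i · u_i for all 1 ≤ i ≤ k. Let A_k be the k×k tridiagonal matrix with diagonal entries λ₁,…,λ_k, entries −1 on the first super- and subdiagonal, and 0 elsewhere. Then det(A_k) = det(u₀, u_{k+1}). -/
/-- The planar determinant `det(u,w) = u¹w² − u²w¹`. -/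
def det2 (u w : ℤ × ℤ) : ℤ := u.1 * w.2 - u.2 * w.1

/-- The `j × j` tridiagonal matrix with diagonal entries `lam 1, …, lam j`,
entries `-1` on the first super- and subdiagonal, and `0` elsewhere. -/
def tridiag (lam : ℕ → ℝ) (j : ℕ) : Matrix (Fin j) (Fin j) ℝ :=
  Matrix.of fun i i' =>
    if (i : ℕ) = (i' : ℕ) then lam ((i : ℕ) + 1)
    else if (i : ℕ) + 1 = (i' : ℕ) ∨ (i' : ℕ) + 1 = (i : ℕ) then -1
    else 0

/-- The continuant, defined by front recursion. -/
noncomputable def cont : (ℕ → ℝ) → ℕ → ℝ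
  | _, 0 => 1
  | lam, 1 => lam 1
  | lam, (n+2) => lam 1 * cont (fun i => lam (i+1)) (n+1) - cont (fun i => lam (i+2)) n

lemma cont_unfold (lam : ℕ → ℝ) (m : ℕ) :
    cont lam (m+2) = lam 1 * cont (fun i => lam (i+1)) (m+1) - cont (fun i => lam (i+2)) m := rfl

lemma cont_back : ∀ n (lam : ℕ → ℝ),
    cont lam (n+2) = lam (n+2) * cont lam (n+1) - cont lam n := by
  intro n
  induction n using Nat.strong_induction_on with
  | _ n ih =>
    intro lam
    match n with
    | 0 => simp [cont]; ring
    | 1 => simp [cont]; ring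
    | (m+2) =>
      have h1 : cont (fun i => lam (i+1)) (m+3)
          = lam (m+4) * cont (fun i => lam (i+1)) (m+2) - cont (fun i => lam (i+1)) (m+1) :=
        ih (m+1) (by omega) (fun i => lam (i+1))
      have h2 : cont (fun i => lam (i+2)) (m+2)
          = lam (m+4) * cont (fun i => lam (i+2)) (m+1) - cont (fun i => lam (i+2)) m :=
        ih m (by omega) (fun i => lam (i+2))
      have g1 : cont lam (m+4) = lam 1 * cont (fun i => lam (i+1)) (m+3)
          - cont (fun i => lam (i+2)) (m+2) := cont_unfold lam (m+2)
      rw [show m+2+2 = m+4 from rfl, show m+2+1 = m+3 from rfl, g1, h1, h2,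
        cont_unfold lam (m+1), cont_unfold lam m]
      ring

lemma tridiag_sub (lam : ℕ → ℝ) (n : ℕ) :
    (tridiag lam (n+1)).submatrix Fin.succ Fin.succ = tridiag (fun i => lam (i+1)) n := by
  ext i j
  simp only [Matrix.submatrix_apply, tridiag, Matrix.of_apply, Fin.val_succ]
  split_ifs <;> first | rfl | omega

lemma succAbove_one_succ {n : ℕ} (j : Fin n) :
    (Fin.succ (0 : Fin (n+1))).succAbove j.succ = j.succ.succ := by
  apply Fin.succAbove_of_le_castSucc
  rw [Fin.le_def]
  simp [Fin.val_succ]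

lemma succAbove_one_zero {n : ℕ} :
    (Fin.succ (0 : Fin (n+1))).succAbove 0 = 0 := by
  rw [Fin.succAbove_of_castSucc_lt]
  · simp
  · rw [Fin.lt_def]; simp

lemma det_tridiag_eq_cont : ∀ n (lam : ℕ → ℝ), (tridiag lam n).det = cont lam n := by
  intro n
  induction n using Nat.strong_induction_on with
  | _ n ih =>
    intro lam
    match n with
    | 0 => simp [tridiag, cont, Matrix.det_fin_zero]
    | 1 => simp [cont, Matrix.det_fin_one, tridiag]
    | (n+2) =>
      rw [Matrix.det_succ_row_zero, Fin.sum_univ_succ, Fin.sum_univ_succ]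
      have hz : ∀ i : Fin n, (-1:ℝ) ^ (((i.succ.succ : Fin (n+2)) : ℕ)) *
          tridiag lam (n+2) 0 i.succ.succ *
          ((tridiag lam (n+2)).submatrix Fin.succ i.succ.succ.succAbove).det = 0 := by
        intro i
        have h0 : tridiag lam (n+2) 0 i.succ.succ = 0 := by
          simp only [tridiag, Matrix.of_apply, Fin.val_zero, Fin.val_succ]
          split_ifs <;> simp_all
        rw [h0]; ring
      rw [Finset.sum_eq_zero (fun i _ => hz i), add_zero]
      have e00 : tridiag lam (n+2) 0 0 = lam 1 := by
        simp [tridiag]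
      have e01 : tridiag lam (n+2) 0 (Fin.succ 0) = -1 := by
        simp [tridiag]
      rw [e00, e01, Fin.succAbove_zero, tridiag_sub, ih (n+1) (by omega)]
      -- second term
      have hBdet : ((tridiag lam (n+2)).submatrix Fin.succ (Fin.succ 0).succAbove).det
          = - (tridiag (fun i => lam (i+2)) n).det := by
        rw [Matrix.det_succ_column_zero, Fin.sum_univ_succ]
        have hBz : ∀ i : Fin n, (-1:ℝ)^(((i.succ : Fin (n+1)):ℕ)) *
            ((tridiag lam (n+2)).submatrix Fin.succ (Fin.succ 0).succAbove) i.succ 0 *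
            (((tridiag lam (n+2)).submatrix Fin.succ (Fin.succ 0).succAbove).submatrix
              i.succ.succAbove Fin.succ).det = 0 := by
          intro i
          have h0 : ((tridiag lam (n+2)).submatrix Fin.succ (Fin.succ 0).succAbove) i.succ 0 = 0 := by
            rw [Matrix.submatrix_apply, succAbove_one_zero]
            simp only [tridiag, Matrix.of_apply, Fin.val_succ, Fin.val_zero]
            split_ifs <;> simp_all
          rw [h0]; ring
        rw [Finset.sum_eq_zero (fun i _ => hBz i), add_zero]
        have hB0 : ((tridiag lam (n+2)).submatrix Fin.succ (Fin.succ 0).succAbove) 0 0 = -1 := by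
          rw [Matrix.submatrix_apply, succAbove_one_zero]
          simp [tridiag]
        have hsub : (((tridiag lam (n+2)).submatrix Fin.succ (Fin.succ 0).succAbove).submatrix
            (Fin.succAbove 0) Fin.succ) = tridiag (fun i => lam (i+2)) n := by
          ext i j
          rw [Fin.succAbove_zero]
          simp only [Matrix.submatrix_apply, succAbove_one_succ]
          simp only [tridiag, Matrix.of_apply, Fin.val_succ]
          split_ifs <;> first | rfl | omega
        rw [hB0, hsub]
        simp
      rw [hBdet, ih n (by omega)]
      simp only [cont, Fin.val_zero, Fin.val_succ, pow_zero, pow_one]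
      ring

lemma det2_smul_sub (a b c : ℤ × ℤ) (m : ℤ) :
    det2 a (m • b - c) = m * det2 a b - det2 a c := by
  simp [det2, Prod.smul_def, smul_eq_mul]
  ring

lemma det2_self (a : ℤ × ℤ) : det2 a a = 0 := by simp [det2]; ring

/-- If `det(u_{i−1}, u_i) = 1` for `1 ≤ i ≤ k+1` and
`u_{i−1} + u_{i+1} = λ_i · u_i` for `1 ≤ i ≤ k`, then
`det(A_k) = det(u₀, u_{k+1})`. -/
theorem det_tridiag_eq_det2 (k : ℕ) (hk : 1 ≤ k) (u : ℕ → ℤ × ℤ) (lam : ℕ → ℤ)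
    (hdet : ∀ i ≤ k, det2 (u i) (u (i + 1)) = 1)
    (hrec : ∀ i, 1 ≤ i → i ≤ k → u (i - 1) + u (i + 1) = lam i • u i) :
    (tridiag (fun i => (lam i : ℝ)) k).det = (det2 (u 0) (u (k + 1)) : ℝ) := by
  rw [det_tridiag_eq_cont]
  have key : ∀ j, j ≤ k → cont (fun i => (lam i : ℝ)) j = (det2 (u 0) (u (j + 1)) : ℝ) := by
    intro j
    induction j using Nat.strong_induction_on with
    | _ j ih =>
      intro hj
      match j with
      | 0 =>
        rw [hdet 0 (Nat.zero_le k)]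
        simp [cont]
      | 1 =>
        have h := hrec 1 le_rfl hj
        have hu2 : u 2 = lam 1 • u 1 - u 0 := eq_sub_of_add_eq' h
        have : det2 (u 0) (u 2) = lam 1 * det2 (u 0) (u 1) - det2 (u 0) (u 0) := by
          rw [hu2, det2_smul_sub]
        rw [this, hdet 0 (Nat.zero_le k), det2_self]
        simp [cont]
      | (m+2) =>
        have h := hrec (m+2) (by omega) hj
        have hu : u (m+3) = lam (m+2) • u (m+2) - u (m+1) := eq_sub_of_add_eq' h
        have hd : det2 (u 0) (u (m+3))
            = lam (m+2) * det2 (u 0) (u (m+2)) - det2 (u 0) (u (m+1)) := by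
          rw [hu, det2_smul_sub]
        rw [cont_back, ih (m+1) (by omega) (by omega), ih m (by omega) (by omega), hd]
        push_cast
        ring
  exact key k le_rfl
end

section
/- Let k ≥ 1 and let u₀, u₁, …, u_{k+1} ∈ ℤ² satisfy det(u_{i−1}, u_i) = 1 for all 1 ≤ i ≤ k+1, and let λ₁,…,λ_k be integers with u_{i−1} + u_{i+1} = λ_i · u_i for all 1 ≤ i ≤ k. Assume moreover that det(u₀, u_{k+1}) > 0 and that for each 1 ≤ j ≤ k one can write u_j = α_j · u₀ + β_j · u_{k+1} with real α_j ≥ 0 and β_j > 0 (i.e. u₁,…,u_k lie in the pointed cone spanned by u₀ and u_{k+1}, off the ray through u₀). Then the k×k real tridiagonal matrix A_k with diagonal entries λ₁,…,λ_k, entries −1 on the first super- and subdiagonal, and 0 elsewhere, is positive definite. -/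
open scoped Matrix


/-- The canonical map `ℤ² → ℝ²`. -/
def toR2 (u : ℤ × ℤ) : ℝ × ℝ := ((u.1 : ℝ), (u.2 : ℝ))

lemma det2_rec (a x y w : ℤ × ℤ) (z : ℤ) (h : x + y = z • w) :
    det2 a x + det2 a y = z * det2 a w := by
  have h1 : x.1 + y.1 = z * w.1 := by
    have := congrArg Prod.fst h; simpa using this
  have h2 : x.2 + y.2 = z * w.2 := by
    have := congrArg Prod.snd h; simpa using this
  simp only [det2]
  linear_combination a.1 * h2 - a.2 * h1

lemma tridiag_herm (lam : ℕ → ℝ) (k : ℕ) : (tridiag lam k).IsHermitian := by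
  ext i j
  simp only [tridiag, Matrix.conjTranspose_apply, Matrix.of_apply, star_trivial]
  split_ifs <;> first | rfl | omega | (rename_i h _; rw [h])

lemma csq_identity (k : ℕ) (lam c e X : ℕ → ℝ)
    (hc : ∀ n < k, c n ≠ 0)
    (he : ∀ n < k, e (n + 1) * c n = 1)
    (h0 : e 0 = 0)
    (hlam : ∀ n < k, lam (n + 1) = c n + e n) :
    ∀ n ≤ k, ∑ i ∈ Finset.range n, lam (i + 1) * X i ^ 2
        - 2 * ∑ i ∈ Finset.range n, X i * X (i + 1)
      = ∑ i ∈ Finset.range n, c i * (X i - X (i + 1) / c i) ^ 2 - X n ^ 2 * e n := by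
  intro n hn
  induction n with
  | zero => simp [h0]
  | succ m ih =>
    have hm : m < k := hn
    have ihm := ih (le_of_lt hn)
    rw [Finset.sum_range_succ, Finset.sum_range_succ, Finset.sum_range_succ]
    have hcm := hc m hm
    have h1 : e (m + 1) = 1 / c m := eq_one_div_of_mul_eq_one_left (he m hm)
    have step : c m * (X m - X (m + 1) / c m) ^ 2
        = c m * X m ^ 2 - 2 * (X m * X (m + 1)) + X (m + 1) ^ 2 * e (m + 1) := by
      rw [h1]; field_simp; ring
    rw [step]
    linear_combination ihm + X m ^ 2 * hlam m hm

/-- If moreover `det(u₀, u_{k+1}) > 0` and `u₁,…,u_k` lie in the pointed cone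
spanned by `u₀` and `u_{k+1}` (off the ray through `u₀`), then the tridiagonal
matrix `A_k` is positive definite. -/
theorem tridiag_posDef (k : ℕ) (hk : 1 ≤ k) (u : ℕ → ℤ × ℤ) (lam : ℕ → ℤ)
    (hdet : ∀ i ≤ k, det2 (u i) (u (i + 1)) = 1)
    (hrec : ∀ i, 1 ≤ i → i ≤ k → u (i - 1) + u (i + 1) = lam i • u i)
    (hpos : 0 < det2 (u 0) (u (k + 1)))
    (hcone : ∀ j, 1 ≤ j → j ≤ k → ∃ α β : ℝ, 0 ≤ α ∧ 0 < β ∧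
      toR2 (u j) = α • toR2 (u 0) + β • toR2 (u (k + 1))) :
    (tridiag (fun i => (lam i : ℝ)) k).PosDef := by
  classical
  set D : ℕ → ℝ := fun j => (det2 (u 0) (u (j + 1)) : ℝ) with hDdef
  have hD0 : D 0 = 1 := by
    have := hdet 0 (Nat.zero_le k); simp [hDdef, this]
  have hDk : 0 < D k := by
    simp only [hDdef]; exact_mod_cast hpos
  have hDpos : ∀ j ≤ k, 0 < D j := by
    intro j hj
    rcases Nat.eq_or_lt_of_le hj with rfl | hjk
    · exact hDk
    rcases Nat.eq_zero_or_pos j with rfl | hj1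
    · rw [hD0]; exact one_pos
    obtain ⟨α, β, hα, hβ, hcj⟩ := hcone (j + 1) (by omega) (by omega)
    have h1 : ((u (j+1)).1 : ℝ) = α * (u 0).1 + β * (u (k+1)).1 := by
      have := congrArg Prod.fst hcj; simpa [toR2] using this
    have h2 : ((u (j+1)).2 : ℝ) = α * (u 0).2 + β * (u (k+1)).2 := by
      have := congrArg Prod.snd hcj; simpa [toR2] using this
    have hDj : D j = β * D k := by
      simp only [hDdef, det2]
      push_cast
      linear_combination ((u 0).1 : ℝ) * h2 - ((u 0).2 : ℝ) * h1
    rw [hDj]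
    exact mul_pos hβ hDk
  set c : ℕ → ℝ := fun n => D (n + 1) / D n with hcdef
  set e : ℕ → ℝ := fun n => if n = 0 then 0 else D (n - 1) / D n with hedef
  have hc : ∀ n < k, c n ≠ 0 := fun n hn =>
    ne_of_gt (div_pos (hDpos (n + 1) (by omega)) (hDpos n (by omega)))
  have he : ∀ n < k, e (n + 1) * c n = 1 := by
    intro n hn
    have h1 := (hDpos (n + 1) (by omega)).ne'
    have h2 := (hDpos n (by omega)).ne'
    simp only [hedef, hcdef, Nat.add_sub_cancel, if_neg (Nat.succ_ne_zero n)]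
    field_simp
  have h0 : e 0 = 0 := by simp [hedef]
  have hlam : ∀ n < k, ((lam (n + 1) : ℝ)) = c n + e n := by
    intro n hn
    have hr := hrec (n + 1) (by omega) (by omega)
    simp only [Nat.add_sub_cancel] at hr
    have key : det2 (u 0) (u n) + det2 (u 0) (u (n + 2)) = lam (n + 1) * det2 (u 0) (u (n + 1)) :=
      det2_rec _ _ _ _ _ hr
    rcases Nat.eq_zero_or_pos n with rfl | hn1
    · have hz : det2 (u 0) (u 0) = 0 := by simp [det2, mul_comm]
      rw [hz, zero_add] at key
      have hR : D 1 = (lam 1 : ℝ) * D 0 := by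
        simp only [hDdef]; exact_mod_cast key
      simp only [hcdef, hedef, if_pos rfl, add_zero, hD0, div_one]
      rw [hR, hD0, mul_one]
    · obtain ⟨m, rfl⟩ : ∃ m, n = m + 1 := ⟨n - 1, by omega⟩
      have keyR : D m + D (m + 2) = (lam (m + 2) : ℝ) * D (m + 1) := by
        simp only [hDdef]; exact_mod_cast key
      have hne : D (m + 1) ≠ 0 := (hDpos (m + 1) (by omega)).ne'
      simp only [hcdef, hedef, if_neg (by omega : ¬ m + 1 = 0), Nat.add_sub_cancel]
      rw [div_add_div _ _ hne hne, eq_div_iff (mul_ne_zero hne hne)]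
      simp only [show m + 1 + 1 = m + 2 from rfl]
      linear_combination (- D (m + 1)) * keyR
  refine Matrix.PosDef.of_dotProduct_mulVec_pos ?_ ?_
  · exact tridiag_herm _ _
  intro x hx
  have hstar : star x = x := by funext i; simp
  rw [hstar]
  set X : ℕ → ℝ := fun i => if h : i < k then x ⟨i, h⟩ else 0 with hXdef
  have hXout : ∀ i, k ≤ i → X i = 0 := fun i hi => dif_neg (by omega)
  have hXin : ∀ i : Fin k, X i = x i := fun i => by
    simp only [hXdef, dif_pos i.isLt]
  set A : ℕ → ℕ → ℝ := fun i j =>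
    if i = j then (lam (i + 1) : ℝ) else if i + 1 = j ∨ j + 1 = i then -1 else 0 with hAdef
  have step1 : x ⬝ᵥ (tridiag (fun i => (lam i : ℝ)) k *ᵥ x)
      = ∑ i ∈ Finset.range k, X i * ∑ j ∈ Finset.range k, A i j * X j := by
    rw [← Fin.sum_univ_eq_sum_range (fun i => X i * ∑ j ∈ Finset.range k, A i j * X j) k]
    simp only [dotProduct, Matrix.mulVec]
    refine Finset.sum_congr rfl fun i _ => ?_
    rw [hXin i]
    congr 1
    rw [← Fin.sum_univ_eq_sum_range (fun j => A (i : ℕ) j * X j) k]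
    refine Finset.sum_congr rfl fun j _ => ?_
    rw [hXin j]
    rfl
  have step2 : ∀ i ∈ Finset.range k, (∑ j ∈ Finset.range k, A i j * X j)
      = (lam (i + 1) : ℝ) * X i - X (i + 1) - (if i = 0 then 0 else X (i - 1)) := by
    intro i hi
    rw [Finset.mem_range] at hi
    have split : ∀ j, A i j * X j = (if i = j then (lam (i + 1) : ℝ) * X j else 0)
        + (if i + 1 = j then -X j else 0) + (if j + 1 = i then -X j else 0) := by
      intro j
      simp only [hAdef]
      split_ifs <;> first | ring1 | (exfalso; omega)
    rw [Finset.sum_congr rfl (fun j _ => split j)]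
    rw [Finset.sum_add_distrib, Finset.sum_add_distrib]
    rw [Finset.sum_ite_eq, if_pos (Finset.mem_range.2 hi)]
    have e2 : (∑ j ∈ Finset.range k, if i + 1 = j then -X j else 0) = -X (i + 1) := by
      rw [Finset.sum_ite_eq]
      by_cases h : i + 1 < k
      · rw [if_pos (Finset.mem_range.2 h)]
      · rw [if_neg (by simpa using h), hXout (i + 1) (by omega), neg_zero]
    have e3 : (∑ j ∈ Finset.range k, if j + 1 = i then -X j else 0)
        = -(if i = 0 then 0 else X (i - 1)) := by
      rcases i with _ | m
      · rw [if_pos rfl, neg_zero]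
        exact Finset.sum_eq_zero fun j _ => if_neg (by omega)
      · have hcond : ∀ j : ℕ, (j + 1 = m + 1) = (m = j) := fun j => propext (by omega)
        simp only [hcond]
        rw [Finset.sum_ite_eq, if_pos (Finset.mem_range.2 (by omega)),
          if_neg (Nat.succ_ne_zero m), Nat.add_sub_cancel]
    rw [e2, e3]
    ring
  rw [step1, Finset.sum_congr rfl fun i hi => by rw [step2 i hi]]
  have outer : ∑ i ∈ Finset.range k,
        X i * ((lam (i + 1) : ℝ) * X i - X (i + 1) - (if i = 0 then 0 else X (i - 1)))
      = ∑ i ∈ Finset.range k, (lam (i + 1) : ℝ) * X i ^ 2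
        - ∑ i ∈ Finset.range k, X i * X (i + 1)
        - ∑ i ∈ Finset.range k, (if i = 0 then 0 else X i * X (i - 1)) := by
    rw [← Finset.sum_sub_distrib, ← Finset.sum_sub_distrib]
    refine Finset.sum_congr rfl fun i _ => ?_
    split_ifs <;> ring
  have third : ∑ i ∈ Finset.range k, (if i = 0 then 0 else X i * X (i - 1))
      = ∑ i ∈ Finset.range k, X i * X (i + 1) := by
    obtain ⟨K, rfl⟩ : ∃ K, k = K + 1 := ⟨k - 1, by omega⟩
    rw [Finset.sum_range_succ' (fun i => if i = 0 then 0 else X i * X (i - 1)) K]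
    rw [Finset.sum_range_succ (fun i => X i * X (i + 1)) K]
    rw [hXout (K + 1) le_rfl, mul_zero, add_zero, if_pos rfl, add_zero]
    refine Finset.sum_congr rfl fun i _ => ?_
    rw [if_neg (Nat.succ_ne_zero i), Nat.add_sub_cancel, mul_comm]
  rw [outer, third]
  have QF : ∑ i ∈ Finset.range k, (lam (i + 1) : ℝ) * X i ^ 2
        - ∑ i ∈ Finset.range k, X i * X (i + 1)
        - ∑ i ∈ Finset.range k, X i * X (i + 1)
      = ∑ i ∈ Finset.range k, c i * (X i - X (i + 1) / c i) ^ 2 := by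
    have hcsq := csq_identity k (fun i => (lam i : ℝ)) c e X hc he h0 hlam k le_rfl
    rw [hXout k le_rfl] at hcsq
    have : (0:ℝ) ^ 2 * e k = 0 := by ring
    rw [this, sub_zero] at hcsq
    linarith [hcsq]
  rw [QF]
  have cpos : ∀ i < k, 0 < c i := fun i hi =>
    div_pos (hDpos (i + 1) (by omega)) (hDpos i (by omega))
  have hnonneg : ∀ i ∈ Finset.range k, (0:ℝ) ≤ c i * (X i - X (i + 1) / c i) ^ 2 :=
    fun i hi => mul_nonneg (le_of_lt (cpos i (Finset.mem_range.1 hi))) (sq_nonneg _)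
  refine lt_of_le_of_ne (Finset.sum_nonneg hnonneg) (Ne.symm ?_)
  intro hzero
  have hterm : ∀ i ∈ Finset.range k, c i * (X i - X (i + 1) / c i) ^ 2 = 0 :=
    (Finset.sum_eq_zero_iff_of_nonneg hnonneg).1 hzero
  have heq : ∀ i < k, X i = X (i + 1) / c i := by
    intro i hi
    have h := hterm i (Finset.mem_range.2 hi)
    have := mul_eq_zero.1 h
    rcases this with h1 | h1
    · exact absurd h1 (hc i hi)
    · have := pow_eq_zero_iff (n := 2) (by norm_num) |>.1 h1
      linarith [this]
  have hz : ∀ m i, k ≤ i + m → X i = 0 := by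
    intro m
    induction m with
    | zero => intro i hi; exact hXout i (by omega)
    | succ m ih =>
      intro i hi
      by_cases h : i < k
      · rw [heq i h, ih (i + 1) (by omega), zero_div]
      · exact hXout i (by omega)
  apply hx
  funext i
  rw [← hXin i, hz k i (by omega)]
  rfl
end

section
/- Let I be a finite index set, u : I → ℝ², a : I → ℝ, v ∈ ℝ², and t ≥ 0 a real number. Set P = {m ∈ ℝ² : ⟨m, u_i⟩ ≥ −a_i for all i ∈ I}. Then the following three subsets of ℝ² coincide: (1) the translate {m ∈ ℝ² : ⟨m, u_i⟩ ≥ −(a_i + t·min(0, ⟨v, u_i⟩)) for all i ∈ I} + t·v; (2) the intersection P ∩ (P + t·v); (3) the set {m ∈ ℝ² : ⟨m, u_i⟩ ≥ −a_i + max(0, t·⟨v, u_i⟩) for all i ∈ I}. -/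
/-- The standard inner product on `ℝ²`. -/
def dotR (m w : ℝ × ℝ) : ℝ := m.1 * w.1 + m.2 * w.2

lemma dotR_add_smul (m : ℝ × ℝ) (t : ℝ) (v w : ℝ × ℝ) :
    dotR (m + t • v) w = dotR m w + t * dotR v w := by
  simp [dotR, Prod.smul_def, smul_eq_mul]; ring

lemma image_translate (c : ℝ × ℝ) (S : Set (ℝ × ℝ)) :
    (fun m => m + c) '' S = {m | m - c ∈ S} := by
  ext m
  constructor
  · rintro ⟨y, hy, rfl⟩; simpa using hy
  · intro hm; exact ⟨m - c, hm, by module⟩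

/-- The three descriptions of `P ∩ (P + t·v)` coincide:
(1) the translate by `t·v` of the polyhedron with relaxed constants
`a_i + t·min(0, ⟨v,u_i⟩)`; (2) `P ∩ (P + t·v)`; (3) the polyhedron with
constants `−a_i + max(0, t·⟨v,u_i⟩)`. -/
theorem intersection_translate_eq {I : Type*} [Finite I]
    (u : I → ℝ × ℝ) (a : I → ℝ) (v : ℝ × ℝ) (t : ℝ) (ht : 0 ≤ t) :
    ((fun m => m + t • v) ''
        {m : ℝ × ℝ | ∀ i, -(a i + t * min 0 (dotR v (u i))) ≤ dotR m (u i)}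
      = {m : ℝ × ℝ | ∀ i, -a i ≤ dotR m (u i)} ∩
        ((fun m => m + t • v) '' {m : ℝ × ℝ | ∀ i, -a i ≤ dotR m (u i)})) ∧
    ({m : ℝ × ℝ | ∀ i, -a i ≤ dotR m (u i)} ∩
        ((fun m => m + t • v) '' {m : ℝ × ℝ | ∀ i, -a i ≤ dotR m (u i)})
      = {m : ℝ × ℝ | ∀ i, -a i + max 0 (t * dotR v (u i)) ≤ dotR m (u i)}) := by
  have hsub : ∀ (m : ℝ × ℝ) (i : I),
      dotR (m - t • v) (u i) = dotR m (u i) - t * dotR v (u i) := by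
    intro m i
    have := dotR_add_smul (m - t • v) t v (u i)
    simp only [sub_add_cancel] at this
    linarith
  have key2 : {m : ℝ × ℝ | ∀ i, -a i ≤ dotR m (u i)} ∩
        ((fun m => m + t • v) '' {m : ℝ × ℝ | ∀ i, -a i ≤ dotR m (u i)})
      = {m : ℝ × ℝ | ∀ i, -a i + max 0 (t * dotR v (u i)) ≤ dotR m (u i)} := by
    rw [image_translate]
    ext m
    simp only [Set.mem_inter_iff, Set.mem_setOf_eq, hsub]
    constructor
    · intro ⟨h1, h2⟩ i
      rcases max_cases 0 (t * dotR v (u i)) with ⟨h, _⟩ | ⟨h, _⟩ <;> rw [h]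
      · linarith [h1 i]
      · linarith [h2 i]
    · intro h
      refine ⟨fun i => ?_, fun i => ?_⟩
      · have := h i; have := le_max_left 0 (t * dotR v (u i)); linarith
      · have := h i; have := le_max_right 0 (t * dotR v (u i)); linarith
  refine ⟨?_, key2⟩
  rw [key2, image_translate]
  ext m
  simp only [Set.mem_setOf_eq, hsub]
  have hmin : ∀ i, t * min 0 (dotR v (u i)) = min 0 (t * dotR v (u i)) := by
    intro i
    rcases le_or_gt 0 (dotR v (u i)) with h | h
    · rw [min_eq_left h, min_eq_left (by positivity), mul_zero]
    · rw [min_eq_right h.le, min_eq_right (by nlinarith)]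
  constructor
  · intro h i
    have := h i
    rw [hmin i] at this
    rcases max_cases 0 (t * dotR v (u i)) with ⟨hx, hy⟩ | ⟨hx, hy⟩ <;>
      rw [hx] <;>
      rcases min_cases 0 (t * dotR v (u i)) with ⟨hx', hy'⟩ | ⟨hx', hy'⟩ <;>
      rw [hx'] at this <;> linarith
  · intro h i
    have := h i
    rw [hmin i]
    rcases max_cases 0 (t * dotR v (u i)) with ⟨hx, hy⟩ | ⟨hx, hy⟩ <;>
      rw [hx] at this <;>
      rcases min_cases 0 (t * dotR v (u i)) with ⟨hx', hy'⟩ | ⟨hx', hy'⟩ <;>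
      rw [hx'] <;> linarith
end

section
/- Let P ⊆ ℝ² be a compact convex set with nonempty interior. Let γ = min{y : (x,y) ∈ P}, δ = max{y : (x,y) ∈ P}, and for y ∈ [γ,δ] let ℓ(y) = min{x : (x,y) ∈ P} and r(y) = max{x : (x,y) ∈ P}. For t ≥ 0 with {y ∈ [γ,δ] : r(y) − ℓ(y) ≥ t} nonempty, let b(t) = min{y ∈ [γ,δ] : r(y) − ℓ(y) ≥ t} (this minimum exists), and let g(t) denote the one-dimensional Lebesgue measure of {y ∈ [γ,δ] : r(y) − ℓ(y) ≥ t}. Define Ψ : P → ℝ² by Ψ(x,y) = (x − ℓ(y), y − b(x − ℓ(y))). Then: (1) Ψ is injective on P; (2) the image Ψ(P) equals S = {(t,h) ∈ ℝ² : t ≥ 0, the set {y ∈ [γ,δ] : r(y) − ℓ(y) ≥ t} is nonempty, and 0 ≤ h ≤ g(t)}; (3) Ψ preserves area, i.e. for every Lebesgue-measurable A ⊆ P, the set Ψ(A) is measurable with the same two-dimensional Lebesgue measure as A. -/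
open MeasureTheory

/-- The lowest `y`-coordinate of `P`. -/
noncomputable def gamP (P : Set (ℝ × ℝ)) : ℝ := sInf (Prod.snd '' P)

/-- The highest `y`-coordinate of `P`. -/
noncomputable def delP (P : Set (ℝ × ℝ)) : ℝ := sSup (Prod.snd '' P)

/-- The left endpoint `ℓ(y)` of the horizontal slice of `P` at height `y`. -/
noncomputable def lftP (P : Set (ℝ × ℝ)) (y : ℝ) : ℝ := sInf {x | (x, y) ∈ P}

/-- The right endpoint `r(y)` of the horizontal slice of `P` at height `y`. -/
noncomputable def rgtP (P : Set (ℝ × ℝ)) (y : ℝ) : ℝ := sSup {x | (x, y) ∈ P}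

/-- The superlevel set `{y ∈ [γ,δ] : r(y) − ℓ(y) ≥ t}`. -/
def lvlP (P : Set (ℝ × ℝ)) (t : ℝ) : Set ℝ :=
  {y | gamP P ≤ y ∧ y ≤ delP P ∧ t ≤ rgtP P y - lftP P y}

/-- `b(t)`, the least element of the superlevel set at level `t`. -/
noncomputable def bP (P : Set (ℝ × ℝ)) (t : ℝ) : ℝ := sInf (lvlP P t)

/-- `g(t)`, the one-dimensional Lebesgue measure of the superlevel set at level `t`. -/
noncomputable def gP (P : Set (ℝ × ℝ)) (t : ℝ) : ℝ := (volume (lvlP P t)).toReal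

/-- The double shear `Ψ(x,y) = (x − ℓ(y), y − b(x − ℓ(y)))`. -/
noncomputable def PsiP (P : Set (ℝ × ℝ)) (p : ℝ × ℝ) : ℝ × ℝ :=
  (p.1 - lftP P p.2, p.2 - bP P (p.1 - lftP P p.2))


open Set

namespace PsiAux

variable {P : Set (ℝ × ℝ)}

/-- The horizontal slice. -/
def slice (P : Set (ℝ × ℝ)) (y : ℝ) : Set ℝ := {x | (x, y) ∈ P}

lemma slice_eq_image (P : Set (ℝ × ℝ)) (y : ℝ) :
    slice P y = Prod.fst '' (P ∩ {p | p.2 = y}) := by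
  ext x
  constructor
  · intro hx; exact ⟨(x, y), ⟨hx, rfl⟩, rfl⟩
  · rintro ⟨⟨a, b⟩, ⟨hp, hb⟩, rfl⟩
    simp only [mem_setOf_eq] at hb
    subst hb; exact hp

lemma isCompact_slice (hP : IsCompact P) (y : ℝ) : IsCompact (slice P y) := by
  rw [slice_eq_image]
  exact (hP.inter_right (isClosed_eq continuous_snd continuous_const)).image continuous_fst

lemma convex_slice (hconv : Convex ℝ P) (y : ℝ) : Convex ℝ (slice P y) := by
  intro x₁ hx₁ x₂ hx₂ a b ha hb hab
  have h := hconv hx₁ hx₂ ha hb hab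
  have : a • ((x₁ : ℝ), y) + b • (x₂, y) = (a • x₁ + b • x₂, y) := by
    simp [Prod.ext_iff, smul_eq_mul, ← add_mul, hab]
  rwa [this] at h

lemma eq_Icc_of_compact_convex {s : Set ℝ} (hs : IsCompact s) (hc : Convex ℝ s)
    (hne : s.Nonempty) : s = Icc (sInf s) (sSup s) := by
  apply Subset.antisymm
  · exact fun x hx => ⟨csInf_le hs.bddBelow hx, le_csSup hs.bddAbove hx⟩
  · exact hc.ordConnected.out (hs.sInf_mem hne) (hs.sSup_mem hne)

lemma proj_eq_Icc (hP : IsCompact P) (hconv : Convex ℝ P) (hne : P.Nonempty) :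
    Prod.snd '' P = Icc (gamP P) (delP P) :=
  eq_Icc_of_compact_convex (hP.image continuous_snd)
    (hconv.is_linear_image ⟨fun _ _ => rfl, fun _ _ => rfl⟩) (hne.image _)

lemma slice_nonempty (hP : IsCompact P) (hconv : Convex ℝ P) (hne : P.Nonempty)
    {y : ℝ} (hy : y ∈ Icc (gamP P) (delP P)) : (slice P y).Nonempty := by
  rw [← proj_eq_Icc hP hconv hne] at hy
  obtain ⟨p, hp, hpy⟩ := hy
  exact ⟨p.1, by simpa [slice, ← hpy] using hp⟩

lemma mem_Icc_of_mem {p : ℝ × ℝ} (hP : IsCompact P) (hconv : Convex ℝ P) (hp : p ∈ P) :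
    p.2 ∈ Icc (gamP P) (delP P) := by
  rw [← proj_eq_Icc hP hconv ⟨p, hp⟩]
  exact ⟨p, hp, rfl⟩

lemma lft_mem (hP : IsCompact P) {y : ℝ} (h : (slice P y).Nonempty) :
    (lftP P y, y) ∈ P :=
  (isCompact_slice hP y).sInf_mem h

lemma rgt_mem (hP : IsCompact P) {y : ℝ} (h : (slice P y).Nonempty) :
    (rgtP P y, y) ∈ P :=
  (isCompact_slice hP y).sSup_mem h

lemma lft_le (hP : IsCompact P) {x y : ℝ} (h : (x, y) ∈ P) : lftP P y ≤ x :=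
  csInf_le (isCompact_slice hP y).bddBelow h

lemma le_rgt (hP : IsCompact P) {x y : ℝ} (h : (x, y) ∈ P) : x ≤ rgtP P y :=
  le_csSup (isCompact_slice hP y).bddAbove h

lemma slice_eq_Icc (hP : IsCompact P) (hconv : Convex ℝ P) {y : ℝ}
    (h : (slice P y).Nonempty) : slice P y = Icc (lftP P y) (rgtP P y) :=
  eq_Icc_of_compact_convex (isCompact_slice hP y) (convex_slice hconv y) h


lemma convex_lvl (hP : IsCompact P) (hconv : Convex ℝ P) (hne : P.Nonempty) (t : ℝ) :
    Convex ℝ (lvlP P t) := by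
  intro y₁ h₁ y₂ h₂ a b ha hb hab
  obtain ⟨hγ₁, hδ₁, hw₁⟩ := h₁
  obtain ⟨hγ₂, hδ₂, hw₂⟩ := h₂
  have hs₁ := slice_nonempty hP hconv hne (y := y₁) ⟨hγ₁, hδ₁⟩
  have hs₂ := slice_nonempty hP hconv hne (y := y₂) ⟨hγ₂, hδ₂⟩
  have hIcc : a • y₁ + b • y₂ ∈ Icc (gamP P) (delP P) :=
    (convex_Icc (gamP P) (delP P)) ⟨hγ₁, hδ₁⟩ ⟨hγ₂, hδ₂⟩ ha hb hab
  refine ⟨hIcc.1, hIcc.2, ?_⟩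
  have hl₁ := lft_mem hP hs₁
  have hl₂ := lft_mem hP hs₂
  have hr₁ := rgt_mem hP hs₁
  have hr₂ := rgt_mem hP hs₂
  have hcl : (a • lftP P y₁ + b • lftP P y₂, a • y₁ + b • y₂) ∈ P := by
    have := hconv hl₁ hl₂ ha hb hab
    simpa [Prod.ext_iff, smul_eq_mul] using this
  have hcr : (a • rgtP P y₁ + b • rgtP P y₂, a • y₁ + b • y₂) ∈ P := by
    have := hconv hr₁ hr₂ ha hb hab
    simpa [Prod.ext_iff, smul_eq_mul] using this
  have h1 := lft_le hP hcl
  have h2 := le_rgt hP hcr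
  have e1 : a * t ≤ a * (rgtP P y₁ - lftP P y₁) := by
    exact mul_le_mul_of_nonneg_left hw₁ ha
  have e2 : b * t ≤ b * (rgtP P y₂ - lftP P y₂) := by
    exact mul_le_mul_of_nonneg_left hw₂ hb
  have : a * t + b * t = t := by rw [← add_mul, hab, one_mul]
  simp only [smul_eq_mul] at h1 h2 ⊢
  linarith

lemma isCompact_lvl (hP : IsCompact P) (hconv : Convex ℝ P) (hne : P.Nonempty) (t : ℝ) :
    IsCompact (lvlP P t) := by
  have hK : IsCompact ((P ×ˢ P) ∩ {q : (ℝ × ℝ) × (ℝ × ℝ) | q.1.2 = q.2.2 ∧ t ≤ q.2.1 - q.1.1}) := by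
    apply (hP.prod hP).inter_right
    exact (isClosed_eq (continuous_snd.comp continuous_fst) (continuous_snd.comp continuous_snd)).inter
      (isClosed_le continuous_const ((continuous_fst.comp continuous_snd).sub (continuous_fst.comp continuous_fst)))
  have himg : lvlP P t = (fun q : (ℝ × ℝ) × (ℝ × ℝ) => q.1.2) ''
      ((P ×ˢ P) ∩ {q | q.1.2 = q.2.2 ∧ t ≤ q.2.1 - q.1.1}) := by
    ext y
    constructor
    · rintro ⟨hγ, hδ, hw⟩
      have hs := slice_nonempty hP hconv hne (y := y) ⟨hγ, hδ⟩
      exact ⟨((lftP P y, y), (rgtP P y, y)), ⟨⟨lft_mem hP hs, rgt_mem hP hs⟩, rfl, hw⟩, rfl⟩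
    · rintro ⟨⟨⟨x₁, y₁⟩, ⟨x₂, y₂⟩⟩, ⟨⟨hp1, hp2⟩, heq, hle⟩, rfl⟩
      simp only [mem_setOf_eq] at heq hle ⊢
      subst heq
      have hIcc := mem_Icc_of_mem hP hconv hp1
      refine ⟨hIcc.1, hIcc.2, ?_⟩
      have h1 := lft_le hP hp1
      have h2 := le_rgt hP hp2
      linarith
  rw [himg]
  exact hK.image (continuous_snd.comp continuous_fst)

lemma lvl_eq_Icc (hP : IsCompact P) (hconv : Convex ℝ P) (hne : P.Nonempty) {t : ℝ}
    (h : (lvlP P t).Nonempty) : lvlP P t = Icc (bP P t) (sSup (lvlP P t)) :=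
  eq_Icc_of_compact_convex (isCompact_lvl hP hconv hne t) (convex_lvl hP hconv hne t) h

lemma gP_eq (hP : IsCompact P) (hconv : Convex ℝ P) (hne : P.Nonempty) {t : ℝ}
    (h : (lvlP P t).Nonempty) : gP P t = sSup (lvlP P t) - bP P t := by
  have hb : bP P t ≤ sSup (lvlP P t) :=
    csInf_le_csSup h (isCompact_lvl hP hconv hne t).bddBelow
      (isCompact_lvl hP hconv hne t).bddAbove
  rw [gP]
  conv_lhs => rw [lvl_eq_Icc hP hconv hne h]
  rw [Real.volume_Icc, ENNReal.toReal_ofReal (by linarith)]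

lemma slice_nonempty_iff (hP : IsCompact P) (hconv : Convex ℝ P) (hne : P.Nonempty)
    {y : ℝ} : (slice P y).Nonempty ↔ y ∈ Icc (gamP P) (delP P) := by
  constructor
  · rintro ⟨x, hx⟩
    exact mem_Icc_of_mem hP hconv hx
  · exact slice_nonempty hP hconv hne

lemma measurable_lft (hP : IsCompact P) (hconv : Convex ℝ P) (hne : P.Nonempty) :
    Measurable (lftP P) := by
  apply measurable_of_Iic
  intro a
  have key : lftP P ⁻¹' Iic a =
      (Prod.snd '' (P ∩ {p | p.1 ≤ a})) ∪
      ((Icc (gamP P) (delP P))ᶜ ∩ {_y : ℝ | (0 : ℝ) ≤ a}) := by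
    ext y
    simp only [mem_preimage, mem_Iic, mem_union, mem_inter_iff, mem_compl_iff, mem_setOf_eq]
    by_cases hy : (slice P y).Nonempty
    · have hyIcc := (slice_nonempty_iff hP hconv hne).1 hy
      simp only [hyIcc, not_true_eq_false, false_and, or_false]
      constructor
      · intro hla
        exact ⟨(lftP P y, y), ⟨lft_mem hP hy, hla⟩, rfl⟩
      · rintro ⟨⟨x, y'⟩, ⟨hp, hxa⟩, rfl⟩
        exact le_trans (lft_le hP hp) hxa
    · have hyIcc : y ∉ Icc (gamP P) (delP P) := fun h => hy (slice_nonempty hP hconv hne h)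
      have hl0 : lftP P y = 0 := by
        have : {x | (x, y) ∈ P} = (∅ : Set ℝ) := by
          rw [eq_empty_iff_forall_notMem]
          intro x hx
          exact hy ⟨x, hx⟩
        rw [lftP, this, Real.sInf_empty]
      rw [hl0]
      simp only [hyIcc, not_false_eq_true, true_and]
      constructor
      · intro h; exact Or.inr h
      · rintro (⟨⟨x, y'⟩, ⟨hp, _⟩, rfl⟩ | h)
        · exact absurd ⟨x, hp⟩ hy
        · exact h
  rw [key]
  refine MeasurableSet.union ?_ (MeasurableSet.inter measurableSet_Icc.compl ?_)
  · exact ((hP.inter_right (isClosed_le continuous_fst continuous_const)).image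
      continuous_snd).measurableSet
  · by_cases h : (0 : ℝ) ≤ a <;> simp [h]

lemma measurable_b (hP : IsCompact P) (hconv : Convex ℝ P) (hne : P.Nonempty) :
    Measurable (bP P) := by
  apply measurable_of_Iic
  intro a
  have key : bP P ⁻¹' Iic a =
      {t | ∃ y, y ∈ lvlP P t ∧ y ≤ a} ∪
      ({t | (lvlP P t).Nonempty}ᶜ ∩ {_t : ℝ | (0 : ℝ) ≤ a}) := by
    ext t
    simp only [mem_preimage, mem_Iic, mem_union, mem_inter_iff, mem_compl_iff, mem_setOf_eq]
    by_cases ht : (lvlP P t).Nonempty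
    · simp only [ht, not_true_eq_false, false_and, or_false]
      constructor
      · intro hba
        exact ⟨bP P t, (isCompact_lvl hP hconv hne t).sInf_mem ht, hba⟩
      · rintro ⟨y, hy, hya⟩
        exact le_trans (csInf_le (isCompact_lvl hP hconv hne t).bddBelow hy) hya
    · have hb0 : bP P t = 0 := by
        have : lvlP P t = (∅ : Set ℝ) := not_nonempty_iff_eq_empty.1 ht
        rw [bP, this, Real.sInf_empty]
      rw [hb0]
      simp only [ht, not_false_eq_true, true_and]
      constructor
      · intro h; exact Or.inr h
      · rintro (⟨y, hy, _⟩ | h)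
        · exact absurd ⟨y, hy⟩ ht
        · exact h
  rw [key]
  refine MeasurableSet.union ?_ (MeasurableSet.inter ?_ ?_)
  · have : IsLowerSet {t : ℝ | ∃ y, y ∈ lvlP P t ∧ y ≤ a} := by
      rintro t t' htt' ⟨y, ⟨h1, h2, h3⟩, hya⟩
      exact ⟨y, ⟨h1, h2, le_trans htt' h3⟩, hya⟩
    exact this.ordConnected.measurableSet
  · have : IsLowerSet {t : ℝ | (lvlP P t).Nonempty} := by
      rintro t t' htt' ⟨y, h1, h2, h3⟩
      exact ⟨y, h1, h2, le_trans htt' h3⟩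
    exact this.compl.ordConnected.measurableSet
  · by_cases h : (0 : ℝ) ≤ a <;> simp [h]

lemma measurePreserving_psi (hl : Measurable (lftP P)) (hb : Measurable (bP P)) :
    MeasurePreserving (PsiP P) volume volume := by
  rw [Measure.volume_eq_prod]
  have htrans : ∀ c : ℝ, Measure.map (fun x : ℝ => x - c) volume = volume := by
    intro c
    have : (fun x : ℝ => x - c) = (· + (-c)) := by funext x; rw [sub_eq_add_neg]
    rw [this, map_add_right_eq_self]
  have hS : MeasurePreserving (fun p : ℝ × ℝ => (p.1, p.2 - lftP P p.1))
      ((volume : Measure ℝ).prod volume) ((volume : Measure ℝ).prod volume) :=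
    MeasurePreserving.skew_product (g := fun y x => x - lftP P y) (MeasurePreserving.id volume)
      (measurable_snd.sub (hl.comp measurable_fst)) (Filter.Eventually.of_forall fun y => htrans _)
  have hT1 : MeasurePreserving (fun p : ℝ × ℝ => (p.1 - lftP P p.2, p.2))
      ((volume : Measure ℝ).prod volume) ((volume : Measure ℝ).prod volume) := by
    exact MeasurePreserving.comp MeasureTheory.Measure.measurePreserving_swap
      (hS.comp MeasureTheory.Measure.measurePreserving_swap)
  have hT2 : MeasurePreserving (fun p : ℝ × ℝ => (p.1, p.2 - bP P p.1))
      ((volume : Measure ℝ).prod volume) ((volume : Measure ℝ).prod volume) :=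
    MeasurePreserving.skew_product (g := fun t h => h - bP P t) (MeasurePreserving.id volume)
      (measurable_snd.sub (hb.comp measurable_fst)) (Filter.Eventually.of_forall fun t => htrans _)
  have heq : PsiP P = (fun p : ℝ × ℝ => (p.1, p.2 - bP P p.1)) ∘
      (fun p : ℝ × ℝ => (p.1 - lftP P p.2, p.2)) := rfl
  rw [heq]
  exact hT2.comp hT1

/-- `Ψ` as a measurable equivalence of the plane. -/
noncomputable def psiEquiv (P : Set (ℝ × ℝ)) (hl : Measurable (lftP P))
    (hb : Measurable (bP P)) : (ℝ × ℝ) ≃ᵐ (ℝ × ℝ) where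
  toFun := PsiP P
  invFun := fun q => (q.1 + lftP P (q.2 + bP P q.1), q.2 + bP P q.1)
  left_inv := by
    intro p
    simp only [PsiP, sub_add_cancel]
  right_inv := by
    intro q
    simp only [PsiP, add_sub_cancel_right, add_sub_cancel_left]
  measurable_toFun := by
    simp only [Equiv.coe_fn_mk, PsiP]
    exact (measurable_fst.sub (hl.comp measurable_snd)).prodMk
      (measurable_snd.sub (hb.comp (measurable_fst.sub (hl.comp measurable_snd))))
  measurable_invFun := by
    simp only [Equiv.coe_fn_symm_mk]
    exact (measurable_fst.add (hl.comp (measurable_snd.add (hb.comp measurable_fst)))).prodMk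
      (measurable_snd.add (hb.comp measurable_fst))

end PsiAux

open PsiAux in
/-- For a compact convex `P ⊆ ℝ²` with nonempty interior, the double shear `Ψ`
is injective on `P`, maps `P` onto `{(t,h) : t ≥ 0, lvl(t) ≠ ∅, 0 ≤ h ≤ g(t)}`,
and preserves two-dimensional Lebesgue measure. -/
theorem psi_injective_image_measurePreserving (P : Set (ℝ × ℝ))
    (hP : IsCompact P) (hconv : Convex ℝ P) (hint : (interior P).Nonempty) :
    Set.InjOn (PsiP P) P ∧
    PsiP P '' P = {q : ℝ × ℝ | 0 ≤ q.1 ∧ (lvlP P q.1).Nonempty ∧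
      0 ≤ q.2 ∧ q.2 ≤ gP P q.1} ∧
    ∀ A ⊆ P, MeasurableSet A →
      MeasurableSet (PsiP P '' A) ∧ volume (PsiP P '' A) = volume A := by
  have hne : P.Nonempty := hint.mono interior_subset
  refine ⟨?_, ?_, ?_⟩
  · -- injectivity
    intro p _ q _ h
    have h1 : p.1 - lftP P p.2 = q.1 - lftP P q.2 := congrArg Prod.fst h
    have h2 : p.2 - bP P (p.1 - lftP P p.2) = q.2 - bP P (q.1 - lftP P q.2) :=
      congrArg Prod.snd h
    rw [h1] at h2
    have hy : p.2 = q.2 := by linarith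
    have hx : p.1 = q.1 := by rw [hy] at h1; linarith
    exact Prod.ext hx hy
  · -- image
    ext q
    simp only [Set.mem_image, Set.mem_setOf_eq]
    constructor
    · rintro ⟨⟨x, y⟩, hp, rfl⟩
      have hyIcc := mem_Icc_of_mem hP hconv hp
      have hxl := lft_le hP hp
      have hxr := le_rgt hP hp
      have hylvl : y ∈ lvlP P (x - lftP P y) := ⟨hyIcc.1, hyIcc.2, by linarith⟩
      have hlvlne : (lvlP P (x - lftP P y)).Nonempty := ⟨y, hylvl⟩
      have hbley := csInf_le (isCompact_lvl hP hconv hne (x - lftP P y)).bddBelow hylvl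
      have hylesup := le_csSup (isCompact_lvl hP hconv hne (x - lftP P y)).bddAbove hylvl
      refine ⟨by simpa [PsiP] using sub_nonneg.2 hxl, by simpa [PsiP] using hlvlne, ?_, ?_⟩
      · simp only [PsiP]
        exact sub_nonneg.2 hbley
      · simp only [PsiP]
        rw [gP_eq hP hconv hne hlvlne]
        exact sub_le_sub_right hylesup _
    · rintro ⟨ht0, hlvlne, hh0, hhg⟩
      set t := q.1 with htdef
      set h := q.2 with hhdef
      set y := bP P t + h with hydef
      have hysSup : y ≤ sSup (lvlP P t) := by
        rw [gP_eq hP hconv hne hlvlne] at hhg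
        rw [hydef]; linarith
      have hyb : bP P t ≤ y := le_add_of_nonneg_right hh0
      have hylvl : y ∈ lvlP P t := by
        rw [lvl_eq_Icc hP hconv hne hlvlne]
        exact ⟨hyb, hysSup⟩
      obtain ⟨hγ, hδ, hw⟩ := hylvl
      have hs : (slice P y).Nonempty := slice_nonempty hP hconv hne ⟨hγ, hδ⟩
      have hx : lftP P y + t ∈ slice P y := by
        rw [slice_eq_Icc hP hconv hs]
        exact ⟨le_add_of_nonneg_right ht0, by linarith⟩
      refine ⟨(lftP P y + t, y), hx, ?_⟩
      have hxt : lftP P y + t - lftP P y = t := by ring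
      have : PsiP P (lftP P y + t, y) = (t, y - bP P t) := by
        simp only [PsiP, hxt]
      rw [this, hydef]
      have : bP P t + h - bP P t = h := by ring
      rw [this]
  · -- measure preservation
    intro A _ hAm
    have hl := measurable_lft hP hconv hne
    have hb := measurable_b hP hconv hne
    set e := psiEquiv P hl hb with hedef
    have hmp : MeasurePreserving e volume volume := measurePreserving_psi hl hb
    have hmps : MeasurePreserving e.symm volume volume := MeasurePreserving.symm e hmp
    have himg : PsiP P '' A = e.symm ⁻¹' A := e.toEquiv.image_eq_preimage_symm A
    rw [himg]
    exact ⟨e.symm.measurable hAm, hmps.measure_preimage hAm.nullMeasurableSet⟩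
end

section
/- Let p ∈ ℂ[X,Y] and let (a,b) ∈ ℕ² be an element of the support of p such that for every (c,d) in the support of p with a ≤ c and b ≤ d one has (c,d) = (a,b). Then p does not lie in I^{a+b+1}, where I is the ideal of ℂ[X,Y] generated by X−1 and Y−1; equivalently, the order of vanishing of p at the point (1,1) is at most a+b. -/
open MvPolynomial

private lemma fin2_decomp (m : Fin 2 →₀ ℕ) :
    m = Finsupp.single 0 (m 0) + Finsupp.single 1 (m 1) := by
  ext i
  fin_cases i <;> simp [Finsupp.single_apply]

private lemma pair_eq_iff (i j a b : ℕ) :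
    (Finsupp.single (0 : Fin 2) i + Finsupp.single 1 j
      = Finsupp.single 0 a + Finsupp.single 1 b) ↔ i = a ∧ j = b := by
  constructor
  · intro h
    constructor
    · have := DFunLike.congr_fun h 0; simpa [Finsupp.single_apply] using this
    · have := DFunLike.congr_fun h 1; simpa [Finsupp.single_apply] using this
  · rintro ⟨rfl, rfl⟩; rfl

/-- Every element of `(X₀, X₁)^n` has vanishing coefficients in total degree `< n`. -/
private lemma coeff_pow_le {n : ℕ} {q : MvPolynomial (Fin 2) ℂ}
    (hq : q ∈ (Ideal.span {X 0, X 1} : Ideal (MvPolynomial (Fin 2) ℂ)) ^ n)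
    {m : Fin 2 →₀ ℕ} (hm : m 0 + m 1 < n) : coeff m q = 0 := by
  induction n generalizing q m with
  | zero => omega
  | succ n ih =>
    rw [pow_succ] at hq
    refine Submodule.mul_induction_on hq ?_ ?_
    · intro x hx y hy
      rw [Ideal.mem_span_pair] at hy
      obtain ⟨u, v, rfl⟩ := hy
      have hx0 : x * u ∈ (Ideal.span {X 0, X 1} : Ideal (MvPolynomial (Fin 2) ℂ)) ^ n :=
        Ideal.mul_mem_right _ _ hx
      have hx1 : x * v ∈ (Ideal.span {X 0, X 1} : Ideal (MvPolynomial (Fin 2) ℂ)) ^ n :=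
        Ideal.mul_mem_right _ _ hx
      have : x * (u * X 0 + v * X 1) = (x * u) * X 0 + (x * v) * X 1 := by ring
      rw [this, coeff_add, coeff_mul_X', coeff_mul_X']
      split_ifs with h0 h1 h1
      · rw [ih hx0 ?_, ih hx1 ?_, add_zero]
        · simp only [Finsupp.coe_tsub, Pi.sub_apply, Finsupp.single_apply]
          simp only [Finsupp.mem_support_iff] at h0 h1
          simp only [show ((1:Fin 2) = 0) = False by simp, show ((0:Fin 2) = 1) = False by simp,
            if_true, if_false]
          omega
        · simp only [Finsupp.coe_tsub, Pi.sub_apply, Finsupp.single_apply]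
          simp only [Finsupp.mem_support_iff] at h0 h1
          simp only [show ((1:Fin 2) = 0) = False by simp, show ((0:Fin 2) = 1) = False by simp]
          simp only [if_true, if_false]
          omega
      · rw [ih hx0 ?_, add_zero]
        simp only [Finsupp.coe_tsub, Pi.sub_apply, Finsupp.single_apply]
        simp only [Finsupp.mem_support_iff] at h0
        simp only [show ((1:Fin 2) = 0) = False by simp, if_true, if_false]
        omega
      · rw [ih hx1 ?_, zero_add]
        simp only [Finsupp.coe_tsub, Pi.sub_apply, Finsupp.single_apply]
        simp only [Finsupp.mem_support_iff] at h1
        simp only [show ((0:Fin 2) = 1) = False by simp, if_true, if_false]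
        omega
      · rw [add_zero]
    · intro x y hx hy
      rw [coeff_add, hx, hy, add_zero]

private lemma coeff_target_pow (a b c d : ℕ) :
    coeff (Finsupp.single 0 a + Finsupp.single 1 b)
      ((X 0 + 1 : MvPolynomial (Fin 2) ℂ) ^ c * (X 1 + 1) ^ d)
      = (c.choose a : ℂ) * (d.choose b : ℂ) := by
  rw [add_pow, add_pow]
  simp only [one_pow, mul_one]
  rw [Finset.sum_mul_sum]
  have key : ∀ i j : ℕ, (X (0:Fin 2) ^ i * ((c.choose i : ℕ) : MvPolynomial (Fin 2) ℂ))
        * (X 1 ^ j * ((d.choose j : ℕ) : MvPolynomial (Fin 2) ℂ))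
      = monomial (Finsupp.single 0 i + Finsupp.single 1 j)
          ((c.choose i : ℂ) * (d.choose j : ℂ)) := by
    intro i j
    rw [show ((c.choose i : ℕ) : MvPolynomial (Fin 2) ℂ) = C ((c.choose i : ℕ) : ℂ) by
      simp, show ((d.choose j : ℕ) : MvPolynomial (Fin 2) ℂ) = C ((d.choose j : ℕ) : ℂ) by
      simp, X_pow_eq_monomial, X_pow_eq_monomial]
    rw [show monomial (Finsupp.single (0:Fin 2) i) (1:ℂ) * C ((c.choose i : ℕ) : ℂ) *
        (monomial (Finsupp.single 1 j) 1 * C ((d.choose j : ℕ) : ℂ))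
      = C ((c.choose i : ℕ) * (d.choose j : ℕ) : ℂ) *
        (monomial (Finsupp.single (0:Fin 2) i) (1:ℂ) * monomial (Finsupp.single 1 j) 1) by
      rw [C_mul]; ring]
    rw [monomial_mul, C_mul_monomial]
    ring_nf
  simp only [key, MvPolynomial.coeff_sum, coeff_monomial, pair_eq_iff]
  have step : ∀ i j : ℕ,
      (if i = a ∧ j = b then (c.choose i : ℂ) * (d.choose j : ℂ) else 0)
      = (if i = a then (c.choose i : ℂ) else 0) * (if j = b then (d.choose j : ℂ) else 0) := by
    intro i j; split_ifs with h1 h2 h3 <;> simp_all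
  simp only [step]
  rw [← Finset.sum_mul_sum]
  rw [Finset.sum_ite_eq' (Finset.range (c+1)) a, Finset.sum_ite_eq' (Finset.range (d+1)) b]
  rcases le_or_gt a c with hac | hac <;> rcases le_or_gt b d with hbd | hbd <;>
    simp [Finset.mem_range, Nat.lt_succ_iff, hac, hbd,
      Nat.choose_eq_zero_of_lt, not_le.mpr]

private lemma aeval_shift_eq (p : MvPolynomial (Fin 2) ℂ) :
    (aeval (fun i : Fin 2 => (X i + 1 : MvPolynomial (Fin 2) ℂ))) p
      = ∑ m ∈ p.support, C (coeff m p) * ((X 0 + 1) ^ (m 0) * (X 1 + 1) ^ (m 1)) := by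
  conv_lhs => rw [p.as_sum]
  rw [map_sum]
  refine Finset.sum_congr rfl fun m _ => ?_
  rw [aeval_monomial]
  rw [Finsupp.prod_fintype _ _ (fun i => pow_zero _), Fin.prod_univ_two, algebraMap_eq]

/-- If `(a,b)` lies in the support of `p` and is the only element `(c,d)` of
the support with `a ≤ c` and `b ≤ d`, then `p ∉ I^{a+b+1}` where
`I = (X−1, Y−1)`; i.e. the order of vanishing of `p` at `(1,1)` is at most `a+b`. -/
theorem not_mem_ideal_pow_of_lex_max_support (p : MvPolynomial (Fin 2) ℂ) (a b : ℕ)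
    (hmem : (Finsupp.single 0 a + Finsupp.single 1 b : Fin 2 →₀ ℕ) ∈ p.support)
    (h : ∀ m ∈ p.support, a ≤ m 0 → b ≤ m 1 → m 0 = a ∧ m 1 = b) :
    p ∉ (Ideal.span {MvPolynomial.X 0 - 1, MvPolynomial.X 1 - 1} :
        Ideal (MvPolynomial (Fin 2) ℂ)) ^ (a + b + 1) := by
  intro hp
  set mt : Fin 2 →₀ ℕ := Finsupp.single 0 a + Finsupp.single 1 b with hmt
  set φ : MvPolynomial (Fin 2) ℂ →+* MvPolynomial (Fin 2) ℂ :=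
    (aeval (fun i : Fin 2 => (X i + 1 : MvPolynomial (Fin 2) ℂ)) :
      MvPolynomial (Fin 2) ℂ →ₐ[ℂ] MvPolynomial (Fin 2) ℂ).toRingHom with hφ
  -- the image lies in (X₀, X₁)^(a+b+1)
  have hmap : φ p ∈ (Ideal.span {X 0, X 1} : Ideal (MvPolynomial (Fin 2) ℂ)) ^ (a + b + 1) := by
    have h1 : φ p ∈ Ideal.map φ
        ((Ideal.span {MvPolynomial.X 0 - 1, MvPolynomial.X 1 - 1} :
          Ideal (MvPolynomial (Fin 2) ℂ)) ^ (a + b + 1)) := Ideal.mem_map_of_mem φ hp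
    rw [Ideal.map_pow, Ideal.map_span] at h1
    have himg : φ '' {MvPolynomial.X 0 - 1, MvPolynomial.X 1 - 1}
        = ({X 0, X 1} : Set (MvPolynomial (Fin 2) ℂ)) := by
      rw [Set.image_insert_eq, Set.image_singleton]
      simp [hφ]
    rwa [himg] at h1
  -- but its coefficient at `mt` is the coefficient of `p` at `mt`, which is nonzero
  have hcoeff : coeff mt (φ p) = coeff mt p := by
    have : φ p = ∑ m ∈ p.support, C (coeff m p) * ((X 0 + 1) ^ (m 0) * (X 1 + 1) ^ (m 1)) :=
      aeval_shift_eq p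
    rw [this, MvPolynomial.coeff_sum]
    simp only [hmt, coeff_C_mul, coeff_target_pow]
    rw [Finset.sum_eq_single mt]
    · have h0 : mt 0 = a := by simp [hmt, Finsupp.single_apply]
      have h1 : mt 1 = b := by simp [hmt, Finsupp.single_apply]
      rw [h0, h1]
      simp [hmt]
    · intro m hms hne
      rcases le_or_gt a (m 0) with hac | hac
      · rcases le_or_gt b (m 1) with hbd | hbd
        · obtain ⟨h0, h1⟩ := h m hms hac hbd
          exact absurd (by rw [fin2_decomp m, h0, h1]) hne
        · rw [Nat.choose_eq_zero_of_lt hbd]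
          ring
      · rw [Nat.choose_eq_zero_of_lt hac]
        ring
    · intro hmem'
      exact absurd hmem hmem'
  have hz : coeff mt (φ p) = 0 := by
    refine coeff_pow_le hmap ?_
    have h0 : mt 0 = a := by simp [hmt, Finsupp.single_apply]
    have h1 : mt 1 = b := by simp [hmt, Finsupp.single_apply]
    omega
  rw [hcoeff] at hz
  exact (mem_support_iff.mp hmem) hz
end
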